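/- Let Ω ⊂ ℝ^N be measurable with 0 < |Ω| < ∞, let 1 < p ≤ q, let ‖a‖ ≥ 0, and let u ∈ L^q(Ω). Denote by (u)_Ω the average of u over Ω and let S = supp u ⊂ Ω. Then |(u)_Ω|^p + ‖a‖ |(u)_Ω|^q ≤ (|S|/|Ω|)^{p−1} · (1/|Ω|) ∫_Ω (|u|^p + ‖a‖ |u|^q) dx. -/

import Mathlib

open MeasureTheory

lemma key_holder (N : ℕ) (Ω : Set (Fin N → ℝ)) (hΩ : MeasurableSet Ω)
    (hΩfin : volume Ω < ⊤) (r : ℝ) (hr : 1 < r)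
    (u : (Fin N → ℝ) → ℝ) (hsupp : Function.support u ⊆ Ω)
    (hu : IntegrableOn u Ω)
    (hir : IntegrableOn (fun x => |u x| ^ r) Ω) :
    |∫ x in Ω, u x| ^ r ≤
      (volume (Function.support u)).toReal ^ (r - 1) * ∫ x in Ω, |u x| ^ r := by
  set S := Function.support u with hS
  set T := toMeasurable volume S ∩ Ω with hT
  have hTmeas : MeasurableSet T := (measurableSet_toMeasurable _ _).inter hΩ
  have hST : S ⊆ T := Set.subset_inter (subset_toMeasurable _ _) hsupp
  have hvolT : volume T = volume S := by
    refine le_antisymm ?_ (measure_mono hST)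
    calc volume T ≤ volume (toMeasurable volume S) := measure_mono Set.inter_subset_left
      _ = volume S := measure_toMeasurable _
  have hTfin : volume T < ⊤ := lt_of_le_of_lt (measure_mono Set.inter_subset_right) hΩfin
  have hr0 : (0:ℝ) < r := lt_trans one_pos hr
  have hrc : r.HolderConjugate (Real.conjExponent r) := Real.HolderConjugate.conjExponent hr
  set r' := Real.conjExponent r with hr'
  -- Memℒp of |u|
  have haes : AEStronglyMeasurable u (volume.restrict Ω) := hu.aestronglyMeasurable
  have hmem : MemLp u (ENNReal.ofReal r) (volume.restrict Ω) := by
    have h1 : (ENNReal.ofReal r) ≠ 0 := by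
      simp [ENNReal.ofReal_eq_zero, not_le, hr0]
    have h2 : (ENNReal.ofReal r) ≠ ⊤ := ENNReal.ofReal_ne_top
    have := (memLp_norm_rpow_iff (p := ENNReal.ofReal r) (q := ENNReal.ofReal r)
      haes h1 h2)
    rw [ENNReal.div_self h1 h2] at this
    rw [← this, memLp_one_iff_integrable]
    have : (fun x : Fin N → ℝ => ‖u x‖ ^ (ENNReal.ofReal r).toReal)
        = fun x => |u x| ^ r := by
      funext x
      rw [Real.norm_eq_abs, ENNReal.toReal_ofReal hr0.le]
    rw [this]
    exact hir
  have hmemf : MemLp (fun x => |u x|) (ENNReal.ofReal r) (volume.restrict Ω) := by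
    have := hmem.norm
    simpa [Real.norm_eq_abs] using this
  have hmemg : MemLp (T.indicator fun _ => (1:ℝ)) (ENNReal.ofReal r')
      (volume.restrict Ω) :=
    memLp_indicator_const _ hTmeas 1 (Or.inr ((measure_mono Set.inter_subset_right).trans_lt
      (by simpa using hΩfin)).ne)
  -- Hölder
  have hHolder := integral_mul_le_Lp_mul_Lq_of_nonneg (μ := volume.restrict Ω) hrc
    (Filter.Eventually.of_forall (fun x => abs_nonneg (u x)))
    (Filter.Eventually.of_forall (fun x => Set.indicator_nonneg (fun _ _ => zero_le_one) x))
    hmemf hmemg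
  -- the product equals |u|
  have hprod : (fun x => |u x| * (T.indicator fun _ => (1:ℝ)) x) = fun x => |u x| := by
    funext x
    by_cases hx : u x = 0
    · simp [hx]
    · have : x ∈ T := hST hx
      simp [Set.indicator_of_mem this]
  -- ∫ g ^ r' = volume T
  have hg : (fun x => ((T.indicator fun _ => (1:ℝ)) x) ^ r')
      = T.indicator fun _ => (1:ℝ) := by
    funext x
    by_cases hx : x ∈ T
    · simp [Set.indicator_of_mem hx]
    · simp [Set.indicator_of_notMem hx, Real.zero_rpow hrc.symm.ne_zero]
  have hintg : ∫ x in Ω, ((T.indicator fun _ => (1:ℝ)) x) ^ r'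
      = (volume S).toReal := by
    rw [hg]
    rw [integral_indicator hTmeas]
    rw [setIntegral_const]
    rw [Measure.real_def, Measure.restrict_apply hTmeas]
    rw [Set.inter_eq_left.mpr Set.inter_subset_right]
    rw [hvolT, smul_eq_mul, mul_one]
  rw [hprod, hintg] at hHolder
  have habs : |∫ x in Ω, u x| ≤ ∫ x in Ω, |u x| := by
    simpa [Real.norm_eq_abs] using
      norm_integral_le_integral_norm (μ := volume.restrict Ω) u
  have hIr : (0:ℝ) ≤ ∫ x in Ω, |u x| ^ r :=
    setIntegral_nonneg hΩ fun x _ => Real.rpow_nonneg (abs_nonneg _) r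
  have hs0 : (0:ℝ) ≤ (volume S).toReal := ENNReal.toReal_nonneg
  calc |∫ x in Ω, u x| ^ r
      ≤ ((∫ x in Ω, |u x| ^ r) ^ (1/r) * (volume S).toReal ^ (1/r')) ^ r := by
        apply Real.rpow_le_rpow (abs_nonneg _) (le_trans habs hHolder) hr0.le
    _ = (volume S).toReal ^ (r - 1) * ∫ x in Ω, |u x| ^ r := by
        have hxy : 1/r' * r = r - 1 := by
          rw [one_div, inv_mul_eq_div, hrc.div_conj_eq_sub_one]
        rw [Real.mul_rpow (Real.rpow_nonneg hIr _) (Real.rpow_nonneg hs0 _),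
          ← Real.rpow_mul hIr, ← Real.rpow_mul hs0, one_div_mul_cancel hr0.ne',
          Real.rpow_one, hxy, mul_comm]

theorem stmt_13 (N : ℕ) (Ω : Set (Fin N → ℝ)) (hΩ : MeasurableSet Ω)
    (hΩ0 : 0 < volume Ω) (hΩfin : volume Ω < ⊤)
    (p q A : ℝ) (hp : 1 < p) (hpq : p ≤ q) (hA : 0 ≤ A)
    (u : (Fin N → ℝ) → ℝ) (hsupp : Function.support u ⊆ Ω)
    (hu : IntegrableOn u Ω)
    (hint : IntegrableOn (fun x => |u x| ^ p + A * |u x| ^ q) Ω) :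
    |(volume Ω).toReal⁻¹ * ∫ x in Ω, u x| ^ p +
        A * |(volume Ω).toReal⁻¹ * ∫ x in Ω, u x| ^ q ≤
      ((volume (Function.support u)).toReal / (volume Ω).toReal) ^ (p - 1) *
        ((volume Ω).toReal⁻¹ * ∫ x in Ω, (|u x| ^ p + A * |u x| ^ q)) := by
  have hq : 1 < q := lt_of_lt_of_le hp hpq
  have hp0 : (0:ℝ) < p := lt_trans one_pos hp
  have hq0 : (0:ℝ) < q := lt_trans one_pos hq
  set m := (volume Ω).toReal with hm
  have hm0 : 0 < m := ENNReal.toReal_pos hΩ0.ne' hΩfin.ne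
  set S := Function.support u with hSdef
  set s := (volume S).toReal with hs
  have hsm : s ≤ m := ENNReal.toReal_mono hΩfin.ne (measure_mono hsupp)
  have hs0 : 0 ≤ s := ENNReal.toReal_nonneg
  set I := ∫ x in Ω, u x with hI
  -- integrability of pieces
  have haes : AEStronglyMeasurable u (volume.restrict Ω) := hu.aestronglyMeasurable
  have h1 : IntegrableOn (fun x => |u x| ^ p) Ω := by
    refine Integrable.mono hint ?_ ?_
    · have := (Real.continuous_rpow_const hp0.le).comp_aestronglyMeasurable haes.norm
      simpa [Real.norm_eq_abs] using this
    · refine Filter.Eventually.of_forall fun x => ?_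
      have ha : (0:ℝ) ≤ |u x| ^ p := Real.rpow_nonneg (abs_nonneg _) _
      have hb : (0:ℝ) ≤ A * |u x| ^ q :=
        mul_nonneg hA (Real.rpow_nonneg (abs_nonneg _) _)
      rw [Real.norm_eq_abs, Real.norm_eq_abs, abs_of_nonneg ha,
        abs_of_nonneg (add_nonneg ha hb)]
      linarith
  have h2 : IntegrableOn (fun x => A * |u x| ^ q) Ω := by
    have := hint.sub h1
    refine this.congr ?_
    refine Filter.Eventually.of_forall fun x => ?_
    simp only [Pi.sub_apply]
    ring
  -- monotonicity of the support factor
  have hle : (s/m) ^ (q-1) ≤ (s/m) ^ (p-1) := by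
    rcases eq_or_lt_of_le hs0 with h0 | h0
    · rw [← h0, zero_div, Real.zero_rpow (by linarith : q - 1 ≠ 0),
        Real.zero_rpow (by linarith : p - 1 ≠ 0)]
    · exact Real.rpow_le_rpow_of_exponent_ge (div_pos h0 hm0)
        ((div_le_one hm0).mpr hsm) (by linarith)
  have hkey : ∀ r : ℝ, 0 < r → (m⁻¹) ^ r * s ^ (r-1) = (s/m) ^ (r-1) * m⁻¹ := by
    intro r hr
    have hmr : 0 < m ^ r := Real.rpow_pos_of_pos hm0 r
    have hmr1 : 0 < m ^ (r-1) := Real.rpow_pos_of_pos hm0 (r-1)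
    rw [Real.div_rpow hs0 hm0.le, Real.inv_rpow hm0.le,
      show m ^ r = m ^ (r-1) * m by rw [← Real.rpow_add_one hm0.ne' (r-1)]; ring_nf]
    field_simp
  have habs : |m⁻¹ * I| = m⁻¹ * |I| := by
    rw [abs_mul, abs_of_nonneg (inv_nonneg.mpr hm0.le)]
  have hinvp : (0:ℝ) ≤ m⁻¹ := inv_nonneg.mpr hm0.le
  have hkp := key_holder N Ω hΩ hΩfin p hp u hsupp hu h1
  -- p term
  have htp : |m⁻¹ * I| ^ p ≤ (s/m) ^ (p-1) * (m⁻¹ * ∫ x in Ω, |u x| ^ p) := by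
    rw [habs, Real.mul_rpow hinvp (abs_nonneg _)]
    calc (m⁻¹) ^ p * |I| ^ p
        ≤ (m⁻¹) ^ p * (s ^ (p-1) * ∫ x in Ω, |u x| ^ p) :=
          mul_le_mul_of_nonneg_left hkp (Real.rpow_nonneg hinvp _)
      _ = ((m⁻¹) ^ p * s ^ (p-1)) * ∫ x in Ω, |u x| ^ p := by ring
      _ = ((s/m) ^ (p-1) * m⁻¹) * ∫ x in Ω, |u x| ^ p := by rw [hkey p hp0]
      _ = (s/m) ^ (p-1) * (m⁻¹ * ∫ x in Ω, |u x| ^ p) := by ring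
  -- q term
  have htq : A * |m⁻¹ * I| ^ q ≤ (s/m) ^ (p-1) * (m⁻¹ * ∫ x in Ω, A * |u x| ^ q) := by
    rcases eq_or_lt_of_le hA with hA0 | hA0
    · simp [← hA0]
    · have h2' : IntegrableOn (fun x => |u x| ^ q) Ω := by
        have := h2.const_mul A⁻¹
        refine this.congr (Filter.Eventually.of_forall fun x => ?_)
        field_simp
      have hkq := key_holder N Ω hΩ hΩfin q hq u hsupp hu h2'
      have hIq : (0:ℝ) ≤ ∫ x in Ω, |u x| ^ q :=
        setIntegral_nonneg hΩ fun x _ => Real.rpow_nonneg (abs_nonneg _) _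
      have htq' : |m⁻¹ * I| ^ q ≤ (s/m) ^ (q-1) * (m⁻¹ * ∫ x in Ω, |u x| ^ q) := by
        rw [habs, Real.mul_rpow hinvp (abs_nonneg _)]
        calc (m⁻¹) ^ q * |I| ^ q
            ≤ (m⁻¹) ^ q * (s ^ (q-1) * ∫ x in Ω, |u x| ^ q) :=
              mul_le_mul_of_nonneg_left hkq (Real.rpow_nonneg hinvp _)
          _ = ((m⁻¹) ^ q * s ^ (q-1)) * ∫ x in Ω, |u x| ^ q := by ring
          _ = ((s/m) ^ (q-1) * m⁻¹) * ∫ x in Ω, |u x| ^ q := by rw [hkey q hq0]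
          _ = (s/m) ^ (q-1) * (m⁻¹ * ∫ x in Ω, |u x| ^ q) := by ring
      have hmul : (s/m) ^ (q-1) * (m⁻¹ * ∫ x in Ω, |u x| ^ q)
          ≤ (s/m) ^ (p-1) * (m⁻¹ * ∫ x in Ω, |u x| ^ q) :=
        mul_le_mul_of_nonneg_right hle (mul_nonneg hinvp hIq)
      have : ∫ x in Ω, A * |u x| ^ q = A * ∫ x in Ω, |u x| ^ q :=
        integral_const_mul A _
      rw [this]
      calc A * |m⁻¹ * I| ^ q
          ≤ A * ((s/m) ^ (p-1) * (m⁻¹ * ∫ x in Ω, |u x| ^ q)) :=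
            mul_le_mul_of_nonneg_left (le_trans htq' hmul) hA
        _ = (s/m) ^ (p-1) * (m⁻¹ * (A * ∫ x in Ω, |u x| ^ q)) := by ring
  calc |m⁻¹ * I| ^ p + A * |m⁻¹ * I| ^ q
      ≤ (s/m) ^ (p-1) * (m⁻¹ * ∫ x in Ω, |u x| ^ p)
        + (s/m) ^ (p-1) * (m⁻¹ * ∫ x in Ω, A * |u x| ^ q) := add_le_add htp htq
    _ = (s/m) ^ (p-1) * (m⁻¹ * ((∫ x in Ω, |u x| ^ p) + ∫ x in Ω, A * |u x| ^ q)) := by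
        ring
    _ = (s/m) ^ (p-1) * (m⁻¹ * ∫ x in Ω, (|u x| ^ p + A * |u x| ^ q)) := by
        rw [← integral_add h1 h2]
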